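/- Let x, y be positive integers, let a, b be nonnegative integers, and let c ≥ 1 be an integer. Then (x+y+a−1)!·(b−1)! + (x+y+b−1)!·(a−1)! > (x+a−1)!·(y+b−1)! + (x+b−1)!·(y+a−1)! whenever a, b ≥ 1. -/
import Mathlib

private lemma asc_add (n x y : ℕ) :
    n.ascFactorial (x + y) = n.ascFactorial x * (n + x).ascFactorial y := by
  induction y with
  | zero => simp
  | succ y ih =>
      rw [show x + (y + 1) = (x + y) + 1 from rfl, Nat.ascFactorial_succ, ih,
        Nat.ascFactorial_succ]
      ring

private lemma asc_mono {n m : ℕ} (h : n ≤ m) (k : ℕ) :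
    n.ascFactorial k ≤ m.ascFactorial k := by
  induction k with
  | zero => simp
  | succ k ih =>
      rw [Nat.ascFactorial_succ, Nat.ascFactorial_succ]
      exact Nat.mul_le_mul (by omega) ih

private lemma asc_strict_mono {n m : ℕ} (hn : 0 < n) (h : n < m) {k : ℕ} (hk : 0 < k) :
    n.ascFactorial k < m.ascFactorial k := by
  obtain ⟨k, rfl⟩ := Nat.exists_eq_succ_of_ne_zero hk.ne'
  rw [Nat.ascFactorial_succ, Nat.ascFactorial_succ]
  obtain ⟨n, rfl⟩ := Nat.exists_eq_succ_of_ne_zero hn.ne'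
  have hpos : 0 < m.ascFactorial k :=
    Nat.lt_of_lt_of_le (Nat.ascFactorial_pos n k) (asc_mono h.le k)
  exact Nat.mul_lt_mul_of_lt_of_le (by omega) (asc_mono h.le k) hpos

/-- Core inequality in ascFactorial form, assuming `B ≤ A`. -/
private lemma core (A B x y : ℕ) (hx : 0 < x) (hy : 0 < y) (hAB : B ≤ A) :
    (A + 1).ascFactorial x * (B + 1).ascFactorial y +
      (B + 1).ascFactorial x * (A + 1).ascFactorial y <
    (A + 1).ascFactorial x * (A + 1 + x).ascFactorial y +
      (B + 1).ascFactorial x * (B + 1 + x).ascFactorial y := by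
  have h1 : (B + 1).ascFactorial x ≤ (A + 1).ascFactorial x := asc_mono (by omega) x
  have h2 : (B + 1).ascFactorial y ≤ (A + 1 + x).ascFactorial y := asc_mono (by omega) y
  have h3 : (A + 1).ascFactorial y < (A + 1 + x).ascFactorial y :=
    asc_strict_mono (by omega) (by omega) hy
  have h4 : (B + 1).ascFactorial y < (B + 1 + x).ascFactorial y :=
    asc_strict_mono (by omega) (by omega) hy
  have h5 : 0 < (B + 1).ascFactorial x := Nat.ascFactorial_pos B x
  nlinarith [Nat.mul_le_mul (Nat.sub_le_sub_right h1 ((B+1).ascFactorial x))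
    (Nat.sub_le_sub_right h2 ((B+1).ascFactorial y))]

/-- Core inequality in factorial form. -/
private lemma core' (A B x y : ℕ) (hx : 0 < x) (hy : 0 < y) :
    (x + A).factorial * (y + B).factorial + (x + B).factorial * (y + A).factorial <
      (x + y + A).factorial * B.factorial + (x + y + B).factorial * A.factorial := by
  wlog hAB : B ≤ A generalizing A B
  · have := this B A (by omega); omega
  have key := core A B x y hx hy hAB
  have eA : ∀ m, (m + A).factorial = A.factorial * (A + 1).ascFactorial m := by
    intro m; rw [Nat.factorial_mul_ascFactorial A m, Nat.add_comm]
  have eB : ∀ m, (m + B).factorial = B.factorial * (B + 1).ascFactorial m := by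
    intro m; rw [Nat.factorial_mul_ascFactorial B m, Nat.add_comm]
  rw [eA x, eB y, eB x, eA y, eA (x + y), eB (x + y), asc_add, asc_add]
  have lhs_eq : A.factorial * (A + 1).ascFactorial x * (B.factorial * (B + 1).ascFactorial y) +
      B.factorial * (B + 1).ascFactorial x * (A.factorial * (A + 1).ascFactorial y)
      = (A.factorial * B.factorial) *
        ((A + 1).ascFactorial x * (B + 1).ascFactorial y +
          (B + 1).ascFactorial x * (A + 1).ascFactorial y) := by ring
  have rhs_eq : A.factorial * ((A + 1).ascFactorial x * (A + 1 + x).ascFactorial y) * B.factorial +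
      B.factorial * ((B + 1).ascFactorial x * (B + 1 + x).ascFactorial y) * A.factorial
      = (A.factorial * B.factorial) *
        ((A + 1).ascFactorial x * (A + 1 + x).ascFactorial y +
          (B + 1).ascFactorial x * (B + 1 + x).ascFactorial y) := by ring
  rw [lhs_eq, rhs_eq]
  exact (Nat.mul_lt_mul_left (Nat.mul_pos A.factorial_pos B.factorial_pos)).mpr key

/-- The factorial inequality of Lemma 2.4 applied with shifted arguments `a−1, b−1`:
for positive integers `x, y`, an integer `c ≥ 1`, and integers `a, b ≥ 1`,
`(x+y+a−1)!·(b−1)! + (x+y+b−1)!·(a−1)! > (x+a−1)!·(y+b−1)! + (x+b−1)!·(y+a−1)!`. -/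
theorem factorial_sum_inequality_shifted (x y a b c : ℕ) (hx : 0 < x) (hy : 0 < y)
    (hc : 1 ≤ c) (ha : 1 ≤ a) (hb : 1 ≤ b) :
    (x + y + a - 1).factorial * (b - 1).factorial +
        (x + y + b - 1).factorial * (a - 1).factorial >
      (x + a - 1).factorial * (y + b - 1).factorial +
        (x + b - 1).factorial * (y + a - 1).factorial := by
  obtain ⟨A, rfl⟩ := Nat.exists_eq_add_of_le ha
  obtain ⟨B, rfl⟩ := Nat.exists_eq_add_of_le hb
  have e1 : x + y + (1 + A) - 1 = x + y + A := by omega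
  have e2 : x + y + (1 + B) - 1 = x + y + B := by omega
  have e3 : x + (1 + A) - 1 = x + A := by omega
  have e4 : x + (1 + B) - 1 = x + B := by omega
  have e5 : y + (1 + A) - 1 = y + A := by omega
  have e6 : y + (1 + B) - 1 = y + B := by omega
  have e7 : 1 + A - 1 = A := by omega
  have e8 : 1 + B - 1 = B := by omega
  rw [e1, e2, e3, e4, e5, e6, e7, e8]
  exact core' A B x y hx hy
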